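/- Let v ∈ ℂ^{2n} and let X be an alternating 2n×2n complex matrix. Then the following are equivalent: (i) f(v, X) = 0 for every polynomial function f on ℂ^{2n} × {alternating 2n×2n complex matrices} satisfying f(g w, g Y gᵀ) = f(w, Y) for all g ∈ Sp(2n, ℂ), all w ∈ ℂ^{2n} and all alternating Y, and f(0, 0) = 0; (ii) the matrix X·J is nilpotent. (Thus the Hilbert nilcone 𝔑 of the Sp(2n)-module 𝕍 = ℂ^{2n} ⊕ ∧²ℂ^{2n} is, as a set, ℂ^{2n} × {X alternating : X·J nilpotent}.) -/

import Mathlib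

open Matrix Polynomial

/-- The standard symplectic form matrix `J = [[0, −1ₙ], [1ₙ, 0]]`. -/
def Jmat (n : ℕ) (R : Type*) [CommRing R] :
    Matrix (Fin n ⊕ Fin n) (Fin n ⊕ Fin n) R :=
  Matrix.fromBlocks 0 (-1) 1 0

namespace NilconeAux


variable {n : ℕ}

lemma Jmat_eq (n : ℕ) : Jmat n ℂ = Matrix.J (Fin n) ℂ := rfl

/-- The symplectic bilinear form. -/
noncomputable def omeg (n : ℕ) (x y : Fin n ⊕ Fin n → ℂ) : ℂ :=
  x ⬝ᵥ ((Matrix.J (Fin n) ℂ) *ᵥ y)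

lemma omeg_antisymm (x y : Fin n ⊕ Fin n → ℂ) : omeg n x y = - omeg n y x := by
  unfold omeg
  rw [dotProduct_mulVec, dotProduct_comm]
  have h : x ᵥ* (Matrix.J (Fin n) ℂ) = -((Matrix.J (Fin n) ℂ) *ᵥ x) := by
    have := vecMul_transpose (Matrix.J (Fin n) ℂ)ᵀ x
    rw [transpose_transpose] at this
    rw [this, J_transpose, neg_mulVec]
  rw [h, dotProduct_neg]

lemma omeg_self (x : Fin n ⊕ Fin n → ℂ) : omeg n x x = 0 := by
  have := omeg_antisymm x x
  linear_combination this / 2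

lemma omeg_add_left (x y z : Fin n ⊕ Fin n → ℂ) :
    omeg n (x + y) z = omeg n x z + omeg n y z := add_dotProduct _ _ _

lemma omeg_smul_left (c : ℂ) (x z : Fin n ⊕ Fin n → ℂ) :
    omeg n (c • x) z = c * omeg n x z := smul_dotProduct _ _ _

lemma omeg_zero_left (z : Fin n ⊕ Fin n → ℂ) : omeg n 0 z = 0 := zero_dotProduct _

lemma omeg_add_right (x y z : Fin n ⊕ Fin n → ℂ) :
    omeg n x (y + z) = omeg n x y + omeg n x z := by
  unfold omeg; rw [mulVec_add, dotProduct_add]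

lemma omeg_smul_right (c : ℂ) (x z : Fin n ⊕ Fin n → ℂ) :
    omeg n x (c • z) = c * omeg n x z := by
  unfold omeg; rw [mulVec_smul, dotProduct_smul, smul_eq_mul]

lemma omeg_zero_right (x : Fin n ⊕ Fin n → ℂ) : omeg n x 0 = 0 := by
  unfold omeg; rw [mulVec_zero, dotProduct_zero]

lemma omeg_sum_left {ι : Type*} (s : Finset ι) (f : ι → (Fin n ⊕ Fin n → ℂ))
    (z : Fin n ⊕ Fin n → ℂ) : omeg n (∑ i ∈ s, f i) z = ∑ i ∈ s, omeg n (f i) z := by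
  classical
  induction s using Finset.induction_on with
  | empty => simp [omeg_zero_left]
  | insert _ _ h ih => rw [Finset.sum_insert h, Finset.sum_insert h, omeg_add_left, ih]

lemma omeg_sum_right {ι : Type*} (s : Finset ι) (f : ι → (Fin n ⊕ Fin n → ℂ))
    (z : Fin n ⊕ Fin n → ℂ) : omeg n z (∑ i ∈ s, f i) = ∑ i ∈ s, omeg n z (f i) := by
  classical
  induction s using Finset.induction_on with
  | empty => simp [omeg_zero_right]
  | insert _ _ h ih => rw [Finset.sum_insert h, Finset.sum_insert h, omeg_add_right, ih]

/-- Vanishing of `ω(·, x)` on a span. -/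
lemma omeg_span_left {e : Set (Fin n ⊕ Fin n → ℂ)} {x : Fin n ⊕ Fin n → ℂ}
    (h : ∀ w ∈ e, omeg n w x = 0) {w : Fin n ⊕ Fin n → ℂ}
    (hw : w ∈ Submodule.span ℂ e) : omeg n w x = 0 := by
  induction hw using Submodule.span_induction with
  | mem y hy => exact h y hy
  | zero => exact omeg_zero_left x
  | add y z _ _ hy hz => rw [omeg_add_left, hy, hz, add_zero]
  | smul c y _ hy => rw [omeg_smul_left, hy, mul_zero]

lemma omeg_span_right {e : Set (Fin n ⊕ Fin n → ℂ)} {x : Fin n ⊕ Fin n → ℂ}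
    (h : ∀ w ∈ e, omeg n x w = 0) {w : Fin n ⊕ Fin n → ℂ}
    (hw : w ∈ Submodule.span ℂ e) : omeg n x w = 0 := by
  induction hw using Submodule.span_induction with
  | mem y hy => exact h y hy
  | zero => exact omeg_zero_right x
  | add y z _ _ hy hz => rw [omeg_add_right, hy, hz, add_zero]
  | smul c y _ hy => rw [omeg_smul_right, hy, mul_zero]

/-- Self-adjointness of `A = M·J` for alternating `M`. -/
lemma selfadj_of_alt {M : Matrix (Fin n ⊕ Fin n) (Fin n ⊕ Fin n) ℂ} (hMalt : Mᵀ = -M)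
    (x y : Fin n ⊕ Fin n → ℂ) :
    omeg n ((M * Matrix.J (Fin n) ℂ) *ᵥ x) y = omeg n x ((M * Matrix.J (Fin n) ℂ) *ᵥ y) := by
  set A := M * Matrix.J (Fin n) ℂ with hA
  have key : Aᵀ * Matrix.J (Fin n) ℂ = Matrix.J (Fin n) ℂ * A := by
    rw [hA, transpose_mul, J_transpose, hMalt]
    simp only [Matrix.neg_mul, Matrix.mul_neg, neg_neg, Matrix.mul_assoc]
  unfold omeg
  calc (A *ᵥ x) ⬝ᵥ (Matrix.J (Fin n) ℂ *ᵥ y)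
      = x ᵥ* Aᵀ ⬝ᵥ (Matrix.J (Fin n) ℂ *ᵥ y) := by
        rw [show A *ᵥ x = x ᵥ* Aᵀ from (vecMul_transpose A x).symm ▸ rfl]
    _ = x ⬝ᵥ (Aᵀ * Matrix.J (Fin n) ℂ) *ᵥ y := by
        rw [dotProduct_mulVec, vecMul_vecMul, ← dotProduct_mulVec]
    _ = x ⬝ᵥ (Matrix.J (Fin n) ℂ * A) *ᵥ y := by rw [key]
    _ = x ⬝ᵥ Matrix.J (Fin n) ℂ *ᵥ (A *ᵥ y) := by rw [mulVec_mulVec]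




/-- matrix whose rows represent the functionals `ω(e i, ·)` -/
noncomputable def phiMat {k : ℕ} (e : Fin k → Fin n ⊕ Fin n → ℂ) :
    Matrix (Fin k) (Fin n ⊕ Fin n) ℂ :=
  Matrix.of fun i => (Matrix.J (Fin n) ℂ)ᵀ *ᵥ e i

lemma phiMat_mulVec {k : ℕ} (e : Fin k → Fin n ⊕ Fin n → ℂ) (x : Fin n ⊕ Fin n → ℂ) (i : Fin k) :
    ((phiMat e) *ᵥ x) i = omeg n (e i) x := by
  show (phiMat e) i ⬝ᵥ x = _
  have h1 : (phiMat e) i = e i ᵥ* (Matrix.J (Fin n) ℂ) := by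
    show (Matrix.J (Fin n) ℂ)ᵀ *ᵥ e i = _
    rw [← vecMul_transpose, transpose_transpose]
  rw [h1, ← dotProduct_mulVec]
  rfl

set_option maxHeartbeats 1000000 in
lemma rows_indep {k : ℕ} {e : Fin k → Fin n ⊕ Fin n → ℂ} (he : LinearIndependent ℂ e) :
    LinearIndependent ℂ (fun i => (Matrix.J (Fin n) ℂ)ᵀ *ᵥ e i) := by
  have hker : LinearMap.ker (Matrix.mulVecLin (Matrix.J (Fin n) ℂ)ᵀ) = ⊥ := by
    rw [LinearMap.ker_eq_bot']
    intro x hx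
    simp only [mulVecLin_apply] at hx
    have h1 : (Matrix.J (Fin n) ℂ) *ᵥ x = 0 := by
      rw [J_transpose, neg_mulVec, neg_eq_zero] at hx; exact hx
    have h2 : ((Matrix.J (Fin n) ℂ) * (Matrix.J (Fin n) ℂ)) *ᵥ x = 0 := by
      rw [← mulVec_mulVec, h1, mulVec_zero]
    rw [J_squared, neg_mulVec, one_mulVec, neg_eq_zero] at h2
    exact h2
  have h := LinearIndependent.map' he (Matrix.mulVecLin (Matrix.J (Fin n) ℂ)ᵀ) hker
  exact h

lemma phi_surj {k : ℕ} {e : Fin k → Fin n ⊕ Fin n → ℂ} (he : LinearIndependent ℂ e) :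
    LinearMap.range (phiMat e).mulVecLin = ⊤ := by
  apply Submodule.eq_top_of_finrank_eq
  have h1 : (phiMat e).rank = k := by
    rw [← Matrix.rank_transpose]
    unfold Matrix.rank
    rw [Matrix.range_mulVecLin]
    have : Set.range (phiMat e)ᵀ.col = Set.range (fun i => (Matrix.J (Fin n) ℂ)ᵀ *ᵥ e i) := rfl
    rw [this, finrank_span_eq_card (rows_indep he), Fintype.card_fin]
  have h2 : Module.finrank ℂ (Fin k → ℂ) = k := by
    rw [Module.finrank_pi, Fintype.card_fin]
  rw [h2]
  exact h1
lemma finrank_ker_phi {k : ℕ} {e : Fin k → Fin n ⊕ Fin n → ℂ} (he : LinearIndependent ℂ e) :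
    k + Module.finrank ℂ (LinearMap.ker (phiMat e).mulVecLin) = 2 * n := by
  have := LinearMap.finrank_range_add_finrank_ker (phiMat e).mulVecLin
  rw [phi_surj he, finrank_top, Module.finrank_pi, Fintype.card_fin] at this
  rw [Module.finrank_pi, Fintype.card_sum, Fintype.card_fin] at this
  omega

lemma span_le_ker {k : ℕ} {e : Fin k → Fin n ⊕ Fin n → ℂ}
    (hiso : ∀ i j, omeg n (e i) (e j) = 0) :
    Submodule.span ℂ (Set.range e) ≤ LinearMap.ker (phiMat e).mulVecLin := by
  rw [Submodule.span_le]
  rintro x ⟨j, rfl⟩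
  simp only [SetLike.mem_coe, LinearMap.mem_ker, mulVecLin_apply]
  ext i
  rw [phiMat_mulVec]
  exact hiso i j

lemma card_le_n {k : ℕ} {e : Fin k → Fin n ⊕ Fin n → ℂ} (he : LinearIndependent ℂ e)
    (hiso : ∀ i j, omeg n (e i) (e j) = 0) : k ≤ n := by
  have h1 := Submodule.finrank_mono (span_le_ker hiso)
  rw [finrank_span_eq_card he, Fintype.card_fin] at h1
  have h2 := finrank_ker_phi he
  omega

lemma exists_perp {k : ℕ} {e : Fin k → Fin n ⊕ Fin n → ℂ} (he : LinearIndependent ℂ e)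
    (hiso : ∀ i j, omeg n (e i) (e j) = 0) (hk : k < n) :
    ∃ x, (∀ i, omeg n (e i) x = 0) ∧ x ∉ Submodule.span ℂ (Set.range e) := by
  have hne : ¬ (LinearMap.ker (phiMat e).mulVecLin ≤ Submodule.span ℂ (Set.range e)) := by
    intro hle
    have h1 := Submodule.finrank_mono hle
    rw [finrank_span_eq_card he, Fintype.card_fin] at h1
    have h2 := finrank_ker_phi he
    omega
  obtain ⟨x, hx1, hx2⟩ := SetLike.not_le_iff_exists.mp hne
  refine ⟨x, fun i => ?_, hx2⟩
  rw [LinearMap.mem_ker] at hx1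
  have := congrFun hx1 i
  rw [mulVecLin_apply] at hx1
  calc omeg n (e i) x = ((phiMat e) *ᵥ x) i := (phiMat_mulVec e x i).symm
    _ = 0 := by rw [show (phiMat e) *ᵥ x = 0 from hx1]; rfl





section
variable {A : Matrix (Fin n ⊕ Fin n) (Fin n ⊕ Fin n) ℂ}
  (hsa : ∀ x y, omeg n (A *ᵥ x) y = omeg n x (A *ᵥ y))

include hsa in
lemma omeg_pow (m : ℕ) : ∀ (x y : Fin n ⊕ Fin n → ℂ),
    omeg n ((A ^ m) *ᵥ x) y = omeg n x ((A ^ m) *ᵥ y) := by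
  induction m with
  | zero => intro x y; simp [pow_zero, one_mulVec]
  | succ m ih =>
      intro x y
      have h1 : (A ^ (m+1)) *ᵥ x = (A ^ m) *ᵥ (A *ᵥ x) := by
        rw [mulVec_mulVec, ← pow_succ]
      have h2 : (A ^ (m+1)) *ᵥ y = A *ᵥ ((A ^ m) *ᵥ y) := by
        rw [mulVec_mulVec, ← pow_succ']
      rw [h1, h2, ih (A *ᵥ x) y, hsa]

include hsa in
lemma omeg_pow_self (m : ℕ) (v : Fin n ⊕ Fin n → ℂ) :
    omeg n v ((A ^ m) *ᵥ v) = 0 := by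
  have h1 := omeg_antisymm ((A ^ m) *ᵥ v) v
  rw [omeg_pow hsa m v v] at h1
  linear_combination h1 / 2

include hsa in
/-- The cyclic chain of `v`. -/
lemma exists_chain (hA : IsNilpotent A) (v : Fin n ⊕ Fin n → ℂ) :
    ∃ (c : ℕ) (e : Fin c → (Fin n ⊕ Fin n → ℂ)),
      LinearIndependent ℂ e ∧ (∀ i j, omeg n (e i) (e j) = 0) ∧
      (∀ j, A *ᵥ e j ∈ Submodule.span ℂ (e '' Set.Ioi j)) ∧
      v ∈ Submodule.span ℂ (Set.range e) := by
  obtain ⟨N, hN⟩ := hA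
  have hex : ∃ m, (A ^ m) *ᵥ v = 0 := ⟨N, by rw [hN, zero_mulVec]⟩
  classical
  set c := Nat.find hex with hc
  have hcv : (A ^ c) *ᵥ v = 0 := Nat.find_spec hex
  have hge : ∀ m, c ≤ m → (A ^ m) *ᵥ v = 0 := by
    intro m hm
    have h3 : A ^ m = A ^ (m - c) * A ^ c := by rw [← pow_add]; congr 1; omega
    rw [h3, ← mulVec_mulVec, hcv, mulVec_zero]
  refine ⟨c, fun i => (A ^ (i : ℕ)) *ᵥ v, ?_, ?_, ?_, ?_⟩
  · -- linear independence
    rw [Fintype.linearIndependent_iff]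
    intro g hg
    by_contra hex2
    push_neg at hex2
    obtain ⟨i1, hi1⟩ := hex2
    set S := Finset.univ.filter (fun i => g i ≠ 0) with hS
    have hSne : S.Nonempty := ⟨i1, by simp [hS, hi1]⟩
    set i₀ := S.min' hSne with hi₀
    have hi₀S : i₀ ∈ S := S.min'_mem hSne
    have hgi₀ : g i₀ ≠ 0 := by
      have h4 := hi₀S; rw [hS, Finset.mem_filter] at h4; exact h4.2
    have happ : ∑ i : Fin c, g i • ((A ^ (c - 1 - (i₀ : ℕ) + (i : ℕ))) *ᵥ v) = 0 := by
      have h0 : (A ^ (c - 1 - (i₀ : ℕ))).mulVecLin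
          (∑ i : Fin c, g i • ((A ^ (i : ℕ)) *ᵥ v)) = 0 := by
        rw [hg, map_zero]
      rw [map_sum] at h0
      refine Eq.trans ?_ h0
      refine (Finset.sum_congr rfl fun i _ => ?_).symm
      rw [_root_.map_smul, mulVecLin_apply, mulVec_mulVec, ← pow_add]
    have hsingle : ∑ i : Fin c, g i • ((A ^ (c - 1 - (i₀ : ℕ) + (i : ℕ))) *ᵥ v)
        = g i₀ • ((A ^ (c - 1)) *ᵥ v) := by
      rw [Finset.sum_eq_single i₀]
      · have hε : c - 1 - (i₀ : ℕ) + (i₀ : ℕ) = c - 1 := by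
          have := i₀.isLt; omega
        rw [hε]
      · intro b _ hb
        rcases lt_or_gt_of_ne (fun h : b = i₀ => hb h) with hlt | hgt
        · have hgb : g b = 0 := by
            by_contra hgb
            have hbS : b ∈ S := by rw [hS, Finset.mem_filter]; exact ⟨Finset.mem_univ _, hgb⟩
            have := S.min'_le b hbS
            exact absurd (lt_of_le_of_lt this hlt) (lt_irrefl _)
          rw [hgb, zero_smul]
        · have hblt : (i₀ : ℕ) < (b : ℕ) := hgt
          have hexp : c - 1 - (i₀ : ℕ) + (b : ℕ) = ((b : ℕ) - (i₀ : ℕ) - 1) + c := by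
            have := b.isLt; have := i₀.isLt; omega
          rw [hexp, hge _ (by omega), smul_zero]
      · intro h; exact absurd (Finset.mem_univ i₀) h
    rw [happ] at hsingle
    have hc1 : (A ^ (c - 1)) *ᵥ v ≠ 0 := by
      have hcpos : 0 < c := lt_of_le_of_lt (Nat.zero_le _) i₀.isLt
      exact Nat.find_min hex (by omega)
    exact hgi₀ ((smul_eq_zero.mp hsingle.symm).resolve_right hc1)
  · intro i j
    have h1 : omeg n ((A ^ (i : ℕ)) *ᵥ v) ((A ^ (j : ℕ)) *ᵥ v)
        = omeg n v ((A ^ ((i : ℕ) + (j : ℕ))) *ᵥ v) := by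
      rw [omeg_pow hsa, mulVec_mulVec, ← pow_add]
    rw [h1, omeg_pow_self hsa]
  · intro j
    by_cases hj : (j : ℕ) + 1 < c
    · have h5 : A *ᵥ ((A ^ (j : ℕ)) *ᵥ v) = (A ^ (((⟨(j : ℕ) + 1, hj⟩ : Fin c) : ℕ))) *ᵥ v := by
        rw [mulVec_mulVec, ← pow_succ']
      rw [h5]
      apply Submodule.subset_span
      exact ⟨⟨(j : ℕ) + 1, hj⟩, Set.mem_Ioi.mpr (Fin.lt_def.mpr (by simp)), rfl⟩
    · have hjc : (j : ℕ) + 1 = c := by have := j.isLt; omega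
      have h6 : A *ᵥ ((A ^ (j : ℕ)) *ᵥ v) = 0 := by
        rw [mulVec_mulVec, ← pow_succ']
        rw [show (j : ℕ) + 1 = c from hjc, hcv]
      rw [h6]
      exact Submodule.zero_mem _
  · by_cases hc0 : 0 < c
    · exact Submodule.subset_span ⟨⟨0, hc0⟩, by simp [pow_zero, one_mulVec]⟩
    · have hc' : c = 0 := by omega
      have h8 : v = 0 := by
        have h9 := hcv
        rw [hc'] at h9
        simpa [pow_zero, one_mulVec] using h9
      rw [h8]
      exact Submodule.zero_mem _

end
section
variable {A : Matrix (Fin n ⊕ Fin n) (Fin n ⊕ Fin n) ℂ}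
  (hsa : ∀ x y, omeg n (A *ᵥ x) y = omeg n x (A *ᵥ y))


include hsa in
lemma good_step (hA : IsNilpotent A) {k : ℕ} (hk : k < n)
    {e : Fin k → (Fin n ⊕ Fin n → ℂ)} (he : LinearIndependent ℂ e)
    (hiso : ∀ i j, omeg n (e i) (e j) = 0)
    (htri : ∀ j, A *ᵥ e j ∈ Submodule.span ℂ (e '' Set.Ioi j)) :
    ∃ e' : Fin (k+1) → (Fin n ⊕ Fin n → ℂ),
      LinearIndependent ℂ e' ∧ (∀ i j, omeg n (e' i) (e' j) = 0) ∧
      (∀ j, A *ᵥ e' j ∈ Submodule.span ℂ (e' '' Set.Ioi j)) ∧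
      Submodule.span ℂ (Set.range e) ≤ Submodule.span ℂ (Set.range e') := by
  classical
  set W := Submodule.span ℂ (Set.range e) with hW
  have hWA : ∀ w ∈ W, A *ᵥ w ∈ W := by
    intro w hw
    induction hw using Submodule.span_induction with
    | mem z hz =>
        obtain ⟨j, rfl⟩ := hz
        exact Submodule.span_le.mpr
          (Set.Subset.trans (Set.image_subset_range e _) Submodule.subset_span) (htri j)
    | zero => rw [mulVec_zero]; exact W.zero_mem
    | add y z _ _ hy hz => rw [mulVec_add]; exact W.add_mem hy hz
    | smul c y _ hy => rw [mulVec_smul]; exact W.smul_mem c hy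
  obtain ⟨x, hxperp, hxW⟩ := exists_perp he hiso hk
  have hperpA : ∀ z, (∀ i, omeg n (e i) z = 0) → ∀ i, omeg n (e i) (A *ᵥ z) = 0 := by
    intro z hz i
    rw [← hsa]
    refine omeg_span_left (e := Set.range e) ?_ (hWA (e i) (Submodule.subset_span ⟨i, rfl⟩))
    rintro w ⟨i', rfl⟩
    exact hz i'
  have hpow : ∀ m i, omeg n (e i) ((A ^ m) *ᵥ x) = 0 := by
    intro m
    induction m with
    | zero => intro i; rw [pow_zero, one_mulVec]; exact hxperp i
    | succ m ih =>
        intro i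
        have h1 : (A ^ (m+1)) *ᵥ x = A *ᵥ ((A ^ m) *ᵥ x) := by
          rw [mulVec_mulVec, ← pow_succ']
        rw [h1]
        exact hperpA _ ih i
  have hApowW : ∃ m, (A ^ m) *ᵥ x ∈ W := by
    obtain ⟨N, hN⟩ := hA
    exact ⟨N, by rw [hN, zero_mulVec]; exact W.zero_mem⟩
  set m₀ := Nat.find hApowW with hm₀def
  have hm₀ : (A ^ m₀) *ᵥ x ∈ W := Nat.find_spec hApowW
  have hm₀pos : 0 < m₀ := by
    rcases Nat.eq_zero_or_pos m₀ with h0 | h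
    · exfalso
      have := hm₀
      rw [h0, pow_zero, one_mulVec] at this
      exact hxW this
    · exact h
  set y := (A ^ (m₀ - 1)) *ᵥ x with hy
  have hyW : y ∉ W := Nat.find_min hApowW (Nat.sub_lt hm₀pos one_pos)
  have hyA : A *ᵥ y ∈ W := by
    have h1 : A *ᵥ y = (A ^ m₀) *ᵥ x := by
      have hm1 : m₀ - 1 + 1 = m₀ := Nat.succ_pred_eq_of_pos hm₀pos
      rw [hy, mulVec_mulVec, ← pow_succ', hm1]
    rw [h1]; exact hm₀
  have hyperp : ∀ i, omeg n (e i) y = 0 := hpow _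
  refine ⟨Fin.cons y e, ?_, ?_, ?_, ?_⟩
  · exact linearIndependent_fin_cons.mpr ⟨he, hyW⟩
  · intro i j
    rcases Fin.eq_zero_or_eq_succ i with hi | ⟨i', rfl⟩ <;>
      rcases Fin.eq_zero_or_eq_succ j with hj | ⟨j', rfl⟩
    · rw [hi, hj, Fin.cons_zero]; exact omeg_self y
    · rw [hi, Fin.cons_zero, Fin.cons_succ, omeg_antisymm, hyperp, neg_zero]
    · rw [hj, Fin.cons_zero, Fin.cons_succ]; exact hyperp i'
    · rw [Fin.cons_succ, Fin.cons_succ]; exact hiso i' j'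
  · intro j
    rcases Fin.eq_zero_or_eq_succ j with hj | ⟨j', rfl⟩
    · rw [hj, Fin.cons_zero]
      refine Submodule.span_mono ?_ hyA
      rintro _ ⟨i, rfl⟩
      exact ⟨i.succ, Set.mem_Ioi.mpr (Fin.succ_pos i), by rw [Fin.cons_succ]⟩
    · rw [Fin.cons_succ]
      refine Submodule.span_mono ?_ (htri j')
      rintro _ ⟨l, hl, rfl⟩
      exact ⟨l.succ, Fin.succ_lt_succ_iff.mpr hl, by rw [Fin.cons_succ]⟩
  · refine Submodule.span_mono ?_
    rintro _ ⟨i, rfl⟩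
    exact ⟨i.succ, by rw [Fin.cons_succ]⟩

include hsa in
lemma exists_lagrangian (hA : IsNilpotent A) (v : Fin n ⊕ Fin n → ℂ) :
    ∃ e : Fin n → (Fin n ⊕ Fin n → ℂ),
      LinearIndependent ℂ e ∧ (∀ i j, omeg n (e i) (e j) = 0) ∧
      (∀ j, A *ᵥ e j ∈ Submodule.span ℂ (e '' Set.Ioi j)) ∧
      v ∈ Submodule.span ℂ (Set.range e) := by
  obtain ⟨c, e₀, he₀, hiso₀, htri₀, hv₀⟩ := exists_chain hsa hA v
  have hcn : c ≤ n := card_le_n he₀ hiso₀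
  suffices H : ∀ d k (e : Fin k → (Fin n ⊕ Fin n → ℂ)),
      LinearIndependent ℂ e → (∀ i j, omeg n (e i) (e j) = 0) →
      (∀ j, A *ᵥ e j ∈ Submodule.span ℂ (e '' Set.Ioi j)) →
      v ∈ Submodule.span ℂ (Set.range e) → k + d = n →
      ∃ e' : Fin n → (Fin n ⊕ Fin n → ℂ),
        LinearIndependent ℂ e' ∧ (∀ i j, omeg n (e' i) (e' j) = 0) ∧
        (∀ j, A *ᵥ e' j ∈ Submodule.span ℂ (e' '' Set.Ioi j)) ∧
        v ∈ Submodule.span ℂ (Set.range e') by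
    exact H (n - c) c e₀ he₀ hiso₀ htri₀ hv₀ (by omega)
  intro d
  induction d with
  | zero =>
      intro k e he hiso htri hv hk
      obtain rfl : k = n := by omega
      exact ⟨e, he, hiso, htri, hv⟩
  | succ d ih =>
      intro k e he hiso htri hv hk
      obtain ⟨e', he', hiso', htri', hle⟩ := good_step hsa hA (by omega) he hiso htri
      exact ih (k+1) e' he' hiso' htri' (hle hv) (by omega)

end
lemma sum_single_inl_apply (b : Fin n → ℂ) (p : Fin n ⊕ Fin n) :
    (∑ i, b i • (Pi.single (Sum.inl i) 1 : Fin n ⊕ Fin n → ℂ)) p = Sum.elim b 0 p := by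
  rw [Finset.sum_apply]
  cases p with
  | inl i =>
      simp only [Pi.smul_apply, Pi.single_apply, Sum.elim_inl, smul_eq_mul,
        Sum.inl.injEq, mul_ite, mul_one, mul_zero]
      rw [Finset.sum_ite_eq Finset.univ i b]
      simp
  | inr i => simp [Pi.single_apply]

/-- Stage 1 reduction: conjugate `(v, M)` into normal position by a symplectic matrix. -/
lemma reduction (M : Matrix (Fin n ⊕ Fin n) (Fin n ⊕ Fin n) ℂ) (hMalt : Mᵀ = -M)
    (hnil : IsNilpotent (M * Matrix.J (Fin n) ℂ)) (v : Fin n ⊕ Fin n → ℂ) :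
    ∃ (g : Matrix (Fin n ⊕ Fin n) (Fin n ⊕ Fin n) ℂ) (v₂ : Fin n ⊕ Fin n → ℂ)
      (M₂ : Matrix (Fin n ⊕ Fin n) (Fin n ⊕ Fin n) ℂ),
      g * Matrix.J (Fin n) ℂ * gᵀ = Matrix.J (Fin n) ℂ ∧
      g *ᵥ v₂ = v ∧ g * M₂ * gᵀ = M ∧ M₂ᵀ = -M₂ ∧
      (∀ i, v₂ (Sum.inr i) = 0) ∧
      (∀ i j, M₂ (Sum.inr i) (Sum.inr j) = 0) ∧
      (∀ i j : Fin n, i ≤ j → M₂ (Sum.inl i) (Sum.inr j) = 0) := by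
  classical
  set Jn := Matrix.J (Fin n) ℂ with hJn
  set A := M * Jn with hA
  obtain ⟨e, he, hiso, htri, hv⟩ := exists_lagrangian (selfadj_of_alt hMalt) hnil v
  -- dual family
  have hsurj := phi_surj he
  have hf' : ∀ j : Fin n, ∃ x, ∀ i, omeg n (e i) x = -(if i = j then (1:ℂ) else 0) := by
    intro j
    have : (fun i => -(if i = j then (1:ℂ) else 0)) ∈ LinearMap.range (phiMat e).mulVecLin := by
      rw [hsurj]; trivial
    obtain ⟨x, hx⟩ := this
    refine ⟨x, fun i => ?_⟩
    rw [← phiMat_mulVec e x i]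
    rw [show (phiMat e) *ᵥ x = _ from hx]
  choose f' hf' using hf'
  set f : Fin n → (Fin n ⊕ Fin n → ℂ) :=
    fun j => f' j + ∑ k, (-(omeg n (f' k) (f' j)) / 2) • e k with hf
  have hef : ∀ i j, omeg n (e i) (f j) = -(if i = j then (1:ℂ) else 0) := by
    intro i j
    rw [hf]
    simp only
    rw [omeg_add_right, omeg_sum_right]
    have h2 : ∀ k, omeg n (e i) ((-(omeg n (f' k) (f' j)) / 2) • e k) = 0 := by
      intro k
      rw [omeg_smul_right, hiso, mul_zero]
    rw [Finset.sum_congr rfl (fun k _ => h2 k), Finset.sum_const_zero, add_zero, hf']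
  have hfe : ∀ i j, omeg n (f i) (e j) = (if i = j then (1:ℂ) else 0) := by
    intro i j
    rw [omeg_antisymm, hef]
    simp only [neg_neg]
    by_cases h : i = j
    · subst h; simp
    · simp [h, Ne.symm h]
  have hff : ∀ i j, omeg n (f i) (f j) = 0 := by
    intro i j
    have hfe' : ∀ a b, omeg n (f' a) (e b) = (if b = a then (1:ℂ) else 0) := by
      intro a b
      rw [omeg_antisymm, hf']
      by_cases h : b = a <;> simp [h]
    have hfj : f j = f' j + ∑ l, (-(omeg n (f' l) (f' j)) / 2) • e l := rfl
    have hfi : f i = f' i + ∑ k, (-(omeg n (f' k) (f' i)) / 2) • e k := rfl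
    rw [hfi, omeg_add_left]
    have hB : omeg n (f' i) (f j) = omeg n (f' i) (f' j) + (-(omeg n (f' i) (f' j)) / 2) := by
      rw [hfj, omeg_add_right, omeg_sum_right]
      congr 1
      have h3 : ∀ l, omeg n (f' i) ((-(omeg n (f' l) (f' j)) / 2) • e l)
          = (if l = i then (-(omeg n (f' l) (f' j)) / 2) else 0) := by
        intro l
        rw [omeg_smul_right, hfe']
        by_cases h : l = i <;> simp [h]
      rw [Finset.sum_congr rfl (fun l _ => h3 l), Finset.sum_ite_eq' Finset.univ i]
      simp
    have hC : omeg n (∑ k, (-(omeg n (f' k) (f' i)) / 2) • e k) (f j)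
        = -(-(omeg n (f' j) (f' i)) / 2) := by
      rw [omeg_sum_left]
      have h4 : ∀ k, omeg n ((-(omeg n (f' k) (f' i)) / 2) • e k) (f j)
          = (if k = j then -(-(omeg n (f' k) (f' i)) / 2) else 0) := by
        intro k
        rw [omeg_smul_left, hef]
        by_cases h : k = j <;> simp [h]
      rw [Finset.sum_congr rfl (fun k _ => h4 k), Finset.sum_ite_eq' Finset.univ j]
      simp
    rw [hB, hC]
    have hS := omeg_antisymm (f' j) (f' i)
    linear_combination hS / 2
  -- the symplectic basis matrix
  set bas : (Fin n ⊕ Fin n) → (Fin n ⊕ Fin n → ℂ) := Sum.elim e f with hbas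
  set g : Matrix (Fin n ⊕ Fin n) (Fin n ⊕ Fin n) ℂ := Matrix.of fun p q => bas q p with hg
  have hJ11 : ∀ a b : Fin n, Jn (Sum.inl a) (Sum.inl b) = 0 := by
    intro a b; simp [hJn, Matrix.J]
  have hJ12 : ∀ a b : Fin n, Jn (Sum.inl a) (Sum.inr b) = -(if a = b then (1:ℂ) else 0) := by
    intro a b; simp [hJn, Matrix.J, Matrix.one_apply]
  have hJ21 : ∀ a b : Fin n, Jn (Sum.inr a) (Sum.inl b) = (if a = b then (1:ℂ) else 0) := by
    intro a b; simp [hJn, Matrix.J, Matrix.one_apply]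
  have hJ22 : ∀ a b : Fin n, Jn (Sum.inr a) (Sum.inr b) = 0 := by
    intro a b; simp [hJn, Matrix.J]
  have hbas_omeg : ∀ p q, omeg n (bas p) (bas q) = Jn p q := by
    intro p q
    cases p with
    | inl i =>
        cases q with
        | inl j => rw [hJ11]; exact hiso i j
        | inr j => rw [hJ12]; exact hef i j
    | inr i =>
        cases q with
        | inl j => rw [hJ21]; exact hfe i j
        | inr j => rw [hJ22]; exact hff i j
  have hsymp : gᵀ * Jn * g = Jn := by
    ext p q
    have h5 : (gᵀ * Jn * g) p q = omeg n (bas p) (bas q) := by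
      rw [Matrix.mul_assoc, Matrix.mul_apply]
      unfold omeg dotProduct Matrix.mulVec
      simp only [Matrix.transpose_apply, Matrix.mul_apply, hg, Matrix.of_apply]
      unfold dotProduct
      rfl
    rw [h5, hbas_omeg]
  have hmem : g ∈ Matrix.symplecticGroup (Fin n) ℂ := SymplecticGroup.mem_iff'.mpr hsymp
  have hgJ : g * Jn * gᵀ = Jn := SymplecticGroup.mem_iff.mp hmem
  have hdet : IsUnit g.det := SymplecticGroup.symplectic_det hmem
  have hgg : g * g⁻¹ = 1 := mul_nonsing_inv g hdet
  have hgg' : g⁻¹ * g = 1 := nonsing_inv_mul g hdet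
  have htt : (g⁻¹)ᵀ * gᵀ = 1 := by rw [← transpose_mul, hgg, transpose_one]
  have hJg : (g⁻¹)ᵀ * Jn = Jn * g := by
    calc (g⁻¹)ᵀ * Jn = (g⁻¹)ᵀ * (gᵀ * Jn * g) := by rw [hsymp]
      _ = ((g⁻¹)ᵀ * gᵀ) * (Jn * g) := by simp only [Matrix.mul_assoc]
      _ = Jn * g := by rw [htt, one_mul]
  have hge : ∀ i, g *ᵥ (Pi.single (Sum.inl i) 1 : Fin n ⊕ Fin n → ℂ) = e i := by
    intro i
    rw [mulVec_single_one]
    rfl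
  have hginve : ∀ i, g⁻¹ *ᵥ e i = (Pi.single (Sum.inl i) 1 : Fin n ⊕ Fin n → ℂ) := by
    intro i
    rw [← hge i, mulVec_mulVec, hgg', one_mulVec]
  obtain ⟨a, ha⟩ := (Submodule.mem_span_range_iff_exists_fun ℂ).mp hv
  set v₂ : Fin n ⊕ Fin n → ℂ := Sum.elim a 0 with hv₂def
  have hv₂ : g *ᵥ v₂ = v := by
    have h6 : g⁻¹ *ᵥ v = v₂ := by
      rw [← ha]
      have h7 : g⁻¹ *ᵥ (∑ i, a i • e i) = ∑ i, a i • (g⁻¹ *ᵥ e i) := by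
        simp only [← mulVecLin_apply, map_sum, _root_.map_smul]
      rw [h7]
      funext p
      have h8 : ∀ i, a i • (g⁻¹ *ᵥ e i) = a i • (Pi.single (Sum.inl i) 1 : Fin n ⊕ Fin n → ℂ) := by
        intro i; rw [hginve]
      rw [Finset.sum_congr rfl (fun i _ => h8 i)]
      exact sum_single_inl_apply a p
    rw [← h6, mulVec_mulVec, hgg, one_mulVec]
  set M₂ : Matrix (Fin n ⊕ Fin n) (Fin n ⊕ Fin n) ℂ := g⁻¹ * M * (g⁻¹)ᵀ with hM₂def
  have halt₂ : M₂ᵀ = -M₂ := by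
    rw [hM₂def, transpose_mul, transpose_mul, transpose_transpose, hMalt]
    simp only [Matrix.mul_neg, Matrix.neg_mul, Matrix.mul_assoc]
  have hgM : g * M₂ * gᵀ = M := by
    rw [hM₂def]
    calc g * (g⁻¹ * M * (g⁻¹)ᵀ) * gᵀ = g * (g⁻¹ * (M * ((g⁻¹)ᵀ * gᵀ))) := by
          simp only [Matrix.mul_assoc]
      _ = g * (g⁻¹ * M) := by rw [htt, mul_one]
      _ = (g * g⁻¹) * M := by rw [Matrix.mul_assoc]
      _ = M := by rw [hgg, one_mul]
  have hM₂J : M₂ * Jn = g⁻¹ * (M * Jn) * g := by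
    calc M₂ * Jn = g⁻¹ * (M * ((g⁻¹)ᵀ * Jn)) := by
          rw [hM₂def]; simp only [Matrix.mul_assoc]
      _ = g⁻¹ * (M * (Jn * g)) := by rw [hJg]
      _ = g⁻¹ * (M * Jn) * g := by simp only [Matrix.mul_assoc]
  have hM₂col : ∀ (p : Fin n ⊕ Fin n) (j : Fin n),
      M₂ p (Sum.inr j) = (g⁻¹ *ᵥ (A *ᵥ e j)) p := by
    intro p j
    have h9 : (M₂ * Jn) p (Sum.inl j) = M₂ p (Sum.inr j) := by
      rw [Matrix.mul_apply, Fintype.sum_sum_type]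
      have hz1 : ∀ a : Fin n, M₂ p (Sum.inl a) * Jn (Sum.inl a) (Sum.inl j) = 0 := by
        intro a; rw [hJ11, mul_zero]
      have hz2 : ∀ a : Fin n, M₂ p (Sum.inr a) * Jn (Sum.inr a) (Sum.inl j)
          = (if a = j then M₂ p (Sum.inr a) else 0) := by
        intro a; rw [hJ21]
        by_cases h : a = j <;> simp [h]
      rw [Finset.sum_congr rfl (fun a _ => hz1 a), Finset.sum_congr rfl (fun a _ => hz2 a),
        Finset.sum_const_zero, zero_add, Finset.sum_ite_eq' Finset.univ j]
      simp
    have h10 : (g⁻¹ * (M * Jn) * g) p (Sum.inl j) = (g⁻¹ *ᵥ (A *ᵥ e j)) p := by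
      rw [Matrix.mul_apply]
      have h11 : ∀ s, g s (Sum.inl j) = e j s := fun s => rfl
      rw [Finset.sum_congr rfl (fun s _ => by rw [h11 s])]
      rw [← hA, mulVec_mulVec]
      rfl
    rw [← h9, hM₂J, h10]
  -- coefficients of the triangular action
  have hM₂cols : ∀ j : Fin n, (∀ i, M₂ (Sum.inr i) (Sum.inr j) = 0) ∧
      (∀ i, i ≤ j → M₂ (Sum.inl i) (Sum.inr j) = 0) := by
    intro j
    obtain ⟨l, hlsupp, hlsum⟩ := (Finsupp.mem_span_image_iff_linearCombination ℂ).mp (htri j)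
    have hsupp : ↑l.support ⊆ Set.Ioi j := (Finsupp.mem_supported ℂ l).mp hlsupp
    have hval : ∀ p, (g⁻¹ *ᵥ (A *ᵥ e j)) p
        = ∑ i ∈ l.support, l i • (Pi.single (Sum.inl i) 1 : Fin n ⊕ Fin n → ℂ) p := by
      intro p
      rw [← hlsum, Finsupp.linearCombination_apply]
      have h12 : (Finsupp.sum l fun i c => c • e i) = ∑ i ∈ l.support, l i • e i := rfl
      rw [h12]
      have h13 : g⁻¹ *ᵥ (∑ i ∈ l.support, l i • e i) = ∑ i ∈ l.support, l i • (g⁻¹ *ᵥ e i) := by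
        simp only [← mulVecLin_apply, map_sum, _root_.map_smul]
      rw [h13, Finset.sum_congr rfl (fun i _ => by rw [hginve i]), Finset.sum_apply]
      simp only [Pi.smul_apply]
    constructor
    · intro i
      rw [hM₂col, hval]
      apply Finset.sum_eq_zero
      intro k _
      simp [Pi.single_apply]
    · intro i hij
      rw [hM₂col, hval]
      apply Finset.sum_eq_zero
      intro k hk
      have hkj : j < k := hsupp hk
      have hki : ((Sum.inl i : Fin n ⊕ Fin n) ≠ Sum.inl k) := by
        intro h
        have h' : i = k := by injection h
        subst h'
        exact absurd hkj (not_lt.mpr hij)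
      simp [Pi.single_apply, hki]
  refine ⟨g, v₂, M₂, hgJ, hv₂, hgM, halt₂, fun i => rfl, fun i j => (hM₂cols j).1 i,
    fun i j hij => (hM₂cols j).2 i hij⟩


/-- conjugation invariance of the char polynomial -/
lemma charpoly_conj (g N : Matrix (Fin n ⊕ Fin n) (Fin n ⊕ Fin n) ℂ) (hdet : IsUnit g.det) :
    (g * N * g⁻¹).charpoly = N.charpoly := by
  have hgg : g * g⁻¹ = 1 := mul_nonsing_inv g hdet
  have hch : charmatrix (g * N * g⁻¹)
      = g.map C * charmatrix N * (g⁻¹).map C := by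
    unfold charmatrix
    rw [Matrix.mul_sub, Matrix.sub_mul]
    congr 1
    · have hcomm := Matrix.scalar_commute (X : ℂ[X]) (fun r' => Commute.all _ _) (g.map C)
      calc Matrix.scalar _ (X : ℂ[X])
          = Matrix.scalar _ (X : ℂ[X]) * ((g * g⁻¹).map C) := by rw [hgg]; simp
        _ = Matrix.scalar _ (X : ℂ[X]) * (g.map C * (g⁻¹).map C) := by rw [Matrix.map_mul]
        _ = g.map C * Matrix.scalar _ (X : ℂ[X]) * (g⁻¹).map C := by
            rw [← Matrix.mul_assoc, ← hcomm.eq]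
    · simp only [RingHom.mapMatrix_apply]
      rw [← Matrix.map_mul, ← Matrix.map_mul]
  unfold Matrix.charpoly
  rw [hch, det_mul, det_mul]
  have h1 : (g.map (C : ℂ →+* ℂ[X])).det * (g⁻¹.map (C : ℂ →+* ℂ[X])).det = 1 := by
    rw [← det_mul, ← Matrix.map_mul, hgg]
    simp
  calc (g.map C).det * (charmatrix N).det * ((g⁻¹).map C).det
      = (charmatrix N).det * ((g.map C).det * ((g⁻¹).map C).det) := by ring
    _ = (charmatrix N).det := by rw [h1, mul_one]

lemma sympl_conj {g : Matrix (Fin n ⊕ Fin n) (Fin n ⊕ Fin n) ℂ}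
    (hgJ : g * Matrix.J (Fin n) ℂ * gᵀ = Matrix.J (Fin n) ℂ)
    (Y : Matrix (Fin n ⊕ Fin n) (Fin n ⊕ Fin n) ℂ) :
    (g * Y * gᵀ) * Matrix.J (Fin n) ℂ = g * (Y * Matrix.J (Fin n) ℂ) * g⁻¹ := by
  have hmem : g ∈ Matrix.symplecticGroup (Fin n) ℂ := SymplecticGroup.mem_iff.mpr hgJ
  have hdet : IsUnit g.det := SymplecticGroup.symplectic_det hmem
  have hgg : g * g⁻¹ = 1 := mul_nonsing_inv g hdet
  have hmem' : gᵀ * Matrix.J (Fin n) ℂ * g = Matrix.J (Fin n) ℂ := SymplecticGroup.mem_iff'.mp hmem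
  have h1 : gᵀ * Matrix.J (Fin n) ℂ = Matrix.J (Fin n) ℂ * g⁻¹ := by
    calc gᵀ * Matrix.J (Fin n) ℂ = gᵀ * Matrix.J (Fin n) ℂ * (g * g⁻¹) := by rw [hgg, mul_one]
      _ = (gᵀ * Matrix.J (Fin n) ℂ * g) * g⁻¹ := by simp only [Matrix.mul_assoc]
      _ = Matrix.J (Fin n) ℂ * g⁻¹ := by rw [hmem']
  calc (g * Y * gᵀ) * Matrix.J (Fin n) ℂ = g * Y * (gᵀ * Matrix.J (Fin n) ℂ) := by
        simp only [Matrix.mul_assoc]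
    _ = g * Y * (Matrix.J (Fin n) ℂ * g⁻¹) := by rw [h1]
    _ = g * (Y * Matrix.J (Fin n) ℂ) * g⁻¹ := by simp only [Matrix.mul_assoc]

/-- the generic matrix of variables -/
noncomputable def genMat (n : ℕ) :
    Matrix (Fin n ⊕ Fin n) (Fin n ⊕ Fin n)
      (MvPolynomial ((Fin n ⊕ Fin n) ⊕ ((Fin n ⊕ Fin n) × (Fin n ⊕ Fin n))) ℂ) :=
  Matrix.of fun p q => MvPolynomial.X (Sum.inr (p, q))

noncomputable def traceP (n : ℕ) (k : ℕ) :
    MvPolynomial ((Fin n ⊕ Fin n) ⊕ ((Fin n ⊕ Fin n) × (Fin n ⊕ Fin n))) ℂ :=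
  ((genMat n * (Matrix.J (Fin n) ℂ).map MvPolynomial.C).charpoly).coeff k

lemma eval_traceP (x : (Fin n ⊕ Fin n) ⊕ ((Fin n ⊕ Fin n) × (Fin n ⊕ Fin n)) → ℂ) (k : ℕ) :
    MvPolynomial.eval x (traceP n k)
      = (((Matrix.of fun p q => x (Sum.inr (p, q))) * Matrix.J (Fin n) ℂ).charpoly).coeff k := by
  unfold traceP
  have h1 : MvPolynomial.eval x (((genMat n * (Matrix.J (Fin n) ℂ).map MvPolynomial.C).charpoly).coeff k)
      = (((genMat n * (Matrix.J (Fin n) ℂ).map MvPolynomial.C).charpoly).map (MvPolynomial.eval x)).coeff k := by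
    rw [Polynomial.coeff_map]
  rw [h1, ← Matrix.charpoly_map]
  congr 2
  rw [Matrix.map_mul]
  congr 1
  · ext p q
    simp [genMat, Matrix.map_apply]
  · rw [Matrix.map_map]
    ext p q
    simp [Matrix.map_apply]

lemma card2n : Fintype.card (Fin n ⊕ Fin n) = 2 * n := by
  rw [Fintype.card_sum, Fintype.card_fin]; ring

lemma charpoly_zero_coeff {k : ℕ} (hk : k < 2 * n) :
    ((0 : Matrix (Fin n ⊕ Fin n) (Fin n ⊕ Fin n) ℂ).charpoly).coeff k = 0 := by
  have h := Matrix.isNilpotent_charpoly_sub_pow_of_isNilpotent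
    (M := (0 : Matrix (Fin n ⊕ Fin n) (Fin n ⊕ Fin n) ℂ)) (IsNilpotent.zero)
  have h2 := h.eq_zero
  have h3 : (0 : Matrix (Fin n ⊕ Fin n) (Fin n ⊕ Fin n) ℂ).charpoly
      = X ^ (Fintype.card (Fin n ⊕ Fin n)) := by
    linear_combination (norm := ring_nf) h2
  rw [h3, Polynomial.coeff_X_pow]
  rw [card2n]
  simp [Nat.ne_of_lt hk]

/-- from vanishing of low charpoly coefficients, nilpotency. -/
lemma nilpotent_of_coeffs (B : Matrix (Fin n ⊕ Fin n) (Fin n ⊕ Fin n) ℂ)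
    (h : ∀ k, k < 2 * n → B.charpoly.coeff k = 0) : IsNilpotent B := by
  have hch : B.charpoly = X ^ (2 * n) := by
    ext i
    rcases lt_trichotomy i (2*n) with hi | hi | hi
    · rw [h i hi, Polynomial.coeff_X_pow]
      simp [Nat.ne_of_lt hi]
    · subst hi
      rw [Polynomial.coeff_X_pow]
      simp only [if_pos rfl]
      have hmon := B.charpoly_monic
      have hdeg : B.charpoly.natDegree = 2 * n := by
        rw [Matrix.charpoly_natDegree_eq_dim, card2n]
      rw [← hdeg]
      exact hmon.coeff_natDegree
    · rw [Polynomial.coeff_X_pow]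
      have hdeg : B.charpoly.natDegree = 2 * n := by
        rw [Matrix.charpoly_natDegree_eq_dim, card2n]
      rw [Polynomial.coeff_eq_zero_of_natDegree_lt (by omega)]
      simp [Nat.ne_of_gt hi]
  have := B.aeval_self_charpoly
  rw [hch] at this
  rw [map_pow, aeval_X] at this
  exact ⟨2 * n, this⟩



lemma J11 (a b : Fin n) : Matrix.J (Fin n) ℂ (Sum.inl a) (Sum.inl b) = 0 := by
  simp [Matrix.J]
lemma J12 (a b : Fin n) :
    Matrix.J (Fin n) ℂ (Sum.inl a) (Sum.inr b) = -(if a = b then (1:ℂ) else 0) := by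
  simp [Matrix.J, Matrix.one_apply]
lemma J21 (a b : Fin n) :
    Matrix.J (Fin n) ℂ (Sum.inr a) (Sum.inl b) = (if a = b then (1:ℂ) else 0) := by
  simp [Matrix.J, Matrix.one_apply]
lemma J22 (a b : Fin n) : Matrix.J (Fin n) ℂ (Sum.inr a) (Sum.inr b) = 0 := by
  simp [Matrix.J]

lemma diag_zero_of_alt {m : Type*} [DecidableEq m] {M : Matrix m m ℂ} (h : Mᵀ = -M) :
    ∀ i, M i i = 0 := by
  intro i
  have h1 := congrFun (congrFun h i) i
  rw [Matrix.transpose_apply, Matrix.neg_apply] at h1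
  linear_combination h1 / 2

lemma hpowc {t : ℂ} (ht : t ≠ 0) (m : ℕ) : t ^ m * (t⁻¹) ^ m = 1 := by
  rw [← mul_pow, mul_inv_cancel₀ ht, one_pow]

/-- the diagonal curve weight vector -/
noncomputable def dv (n : ℕ) (t : ℂ) : Fin n ⊕ Fin n → ℂ :=
  Sum.elim (fun i : Fin n => t ^ ((i : ℕ) + 1)) (fun i : Fin n => (t⁻¹) ^ ((i : ℕ) + 1))

lemma diag_conj_apply (d : Fin n ⊕ Fin n → ℂ) (M : Matrix (Fin n ⊕ Fin n) (Fin n ⊕ Fin n) ℂ)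
    (p q : Fin n ⊕ Fin n) :
    ((Matrix.diagonal d) * M * (Matrix.diagonal d)ᵀ) p q = d p * M p q * d q := by
  rw [Matrix.diagonal_transpose, Matrix.mul_diagonal, Matrix.diagonal_mul]

lemma dv_symp {t : ℂ} (ht : t ≠ 0) :
    (Matrix.diagonal (dv n t)) * Matrix.J (Fin n) ℂ * (Matrix.diagonal (dv n t))ᵀ
      = Matrix.J (Fin n) ℂ := by
  ext p q
  rw [diag_conj_apply]
  cases p with
  | inl i =>
      cases q with
      | inl j => rw [J11]; ring
      | inr j =>
          rw [J12]
          rcases eq_or_ne i j with h | h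
          · subst h
            rw [if_pos rfl]
            show (t ^ ((i : ℕ) + 1) * -1) * (t⁻¹) ^ ((i : ℕ) + 1) = -1
            have := hpowc ht ((i : ℕ) + 1)
            linear_combination (-1 : ℂ) * this
          · rw [if_neg h]; ring
  | inr i =>
      cases q with
      | inl j =>
          rw [J21]
          rcases eq_or_ne i j with h | h
          · subst h
            rw [if_pos rfl]
            show ((t⁻¹) ^ ((i : ℕ) + 1) * 1) * t ^ ((i : ℕ) + 1) = 1
            have := hpowc ht ((i : ℕ) + 1)
            linear_combination this
          · rw [if_neg h]; ring
      | inr j => rw [J22]; ring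


end NilconeAux

/-- For `v ∈ ℂ^{2n}` and an alternating `2n×2n` complex matrix `M`, every
`Sp(2n,ℂ)`-invariant polynomial function on `ℂ^{2n} × {alternating matrices}`
vanishing at `(0,0)` vanishes at `(v, M)` if and only if `M·J` is nilpotent.
Thus the Hilbert nilcone of `𝕍 = ℂ^{2n} ⊕ ∧²ℂ^{2n}` is, as a set,
`ℂ^{2n} × {X alternating : X·J nilpotent}`. -/
theorem pair_mem_hilbert_nilcone_iff_nilpotent {n : ℕ} (hn : 1 ≤ n)
    (v : Fin n ⊕ Fin n → ℂ)
    (M : Matrix (Fin n ⊕ Fin n) (Fin n ⊕ Fin n) ℂ)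
    (hMalt : Mᵀ = -M) (hMdiag : ∀ i, M i i = 0) :
    (∀ P : MvPolynomial ((Fin n ⊕ Fin n) ⊕ ((Fin n ⊕ Fin n) × (Fin n ⊕ Fin n))) ℂ,
        (∀ g : Matrix (Fin n ⊕ Fin n) (Fin n ⊕ Fin n) ℂ,
          g * Jmat n ℂ * gᵀ = Jmat n ℂ →
          ∀ (w : Fin n ⊕ Fin n → ℂ) (Y : Matrix (Fin n ⊕ Fin n) (Fin n ⊕ Fin n) ℂ),
            Yᵀ = -Y → (∀ i, Y i i = 0) →
            MvPolynomial.eval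
              (Sum.elim (g.mulVec w) (fun p => (g * Y * gᵀ) p.1 p.2)) P =
            MvPolynomial.eval (Sum.elim w (fun p => Y p.1 p.2)) P) →
        MvPolynomial.eval (fun _ => (0 : ℂ)) P = 0 →
        MvPolynomial.eval (Sum.elim v (fun p => M p.1 p.2)) P = 0) ↔
    IsNilpotent (M * Jmat n ℂ) := by
  constructor
  · -- forward direction: apply the hypothesis to charpoly coefficients
    intro h
    apply NilconeAux.nilpotent_of_coeffs
    intro k hk
    have happ := h (NilconeAux.traceP n k)
      (by
        intro g hgJ w Y hYalt hYdiag
        rw [NilconeAux.eval_traceP, NilconeAux.eval_traceP]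
        have hmem : g ∈ Matrix.symplecticGroup (Fin n) ℂ :=
          SymplecticGroup.mem_iff.mpr hgJ
        have hconj : ((g * Y * gᵀ) * Matrix.J (Fin n) ℂ).charpoly
            = (Y * Matrix.J (Fin n) ℂ).charpoly := by
          rw [NilconeAux.sympl_conj hgJ Y,
            NilconeAux.charpoly_conj _ _ (SymplecticGroup.symplectic_det hmem)]
        exact congrArg (fun q : Polynomial ℂ => q.coeff k) hconj)
      (by
        rw [NilconeAux.eval_traceP]
        have h0 : (Matrix.of fun (p q : Fin n ⊕ Fin n) =>
            (fun _ : (Fin n ⊕ Fin n) ⊕ ((Fin n ⊕ Fin n) × (Fin n ⊕ Fin n)) => (0:ℂ))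
              (Sum.inr (p, q)))
            = (0 : Matrix (Fin n ⊕ Fin n) (Fin n ⊕ Fin n) ℂ) := rfl
        rw [h0, Matrix.zero_mul]
        exact NilconeAux.charpoly_zero_coeff hk)
    rw [NilconeAux.eval_traceP] at happ
    exact happ
  · -- backward direction
    intro hnil P hinv hP0
    classical
    obtain ⟨g, v₂, M₂, hgJ, hv2, hgM, halt₂, hvr, hM2rr, hM2lr⟩ :=
      NilconeAux.reduction M hMalt hnil v
    have hdiag₂ : ∀ p, M₂ p p = 0 := NilconeAux.diag_zero_of_alt halt₂
    have hM2rl : ∀ i j : Fin n, j ≤ i → M₂ (Sum.inr i) (Sum.inl j) = 0 := by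
      intro i j hji
      have h1 := congrFun (congrFun halt₂ (Sum.inl j)) (Sum.inr i)
      rw [Matrix.transpose_apply, Matrix.neg_apply, hM2lr j i hji] at h1
      simpa using h1
    set vexp : Fin n ⊕ Fin n → ℕ :=
      Sum.elim (fun i : Fin n => (i : ℕ) + 1) (fun _ => 1) with hvexp
    set mexp : (Fin n ⊕ Fin n) → (Fin n ⊕ Fin n) → ℕ := fun p q =>
      Sum.elim (fun i : Fin n => Sum.elim (fun j : Fin n => ((i : ℕ) + 1) + ((j : ℕ) + 1))
          (fun j : Fin n => (i : ℕ) - (j : ℕ)) q)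
        (fun i : Fin n => Sum.elim (fun j : Fin n => (j : ℕ) - (i : ℕ)) (fun _ => 1) q) p
      with hmexp
    set U : ((Fin n ⊕ Fin n) ⊕ ((Fin n ⊕ Fin n) × (Fin n ⊕ Fin n))) → Polynomial ℂ :=
      Sum.elim (fun q => Polynomial.C (v₂ q) * Polynomial.X ^ (vexp q))
        (fun pq => Polynomial.C (M₂ pq.1 pq.2) * Polynomial.X ^ (mexp pq.1 pq.2)) with hU
    have hact : ∀ t : ℂ, t ≠ 0 →
        (fun s => (U s).eval t)
          = Sum.elim ((Matrix.diagonal (NilconeAux.dv n t)) *ᵥ v₂)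
              (fun p => ((Matrix.diagonal (NilconeAux.dv n t)) * M₂
                * (Matrix.diagonal (NilconeAux.dv n t))ᵀ) p.1 p.2) := by
      intro t ht
      funext s
      cases s with
      | inl q =>
          simp only [hU, Sum.elim_inl, Matrix.mulVec_diagonal]
          cases q with
          | inl i =>
              simp only [hvexp, Sum.elim_inl, Polynomial.eval_mul, Polynomial.eval_pow,
                Polynomial.eval_C, Polynomial.eval_X, NilconeAux.dv]
              ring
          | inr i =>
              simp only [hvexp, Sum.elim_inr, Polynomial.eval_mul, Polynomial.eval_pow,
                Polynomial.eval_C, Polynomial.eval_X, NilconeAux.dv, hvr i]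
              ring
      | inr pq =>
          obtain ⟨p, q⟩ := pq
          simp only [hU, Sum.elim_inr, NilconeAux.diag_conj_apply]
          cases p with
          | inl i =>
              cases q with
              | inl j =>
                  simp only [hmexp, Sum.elim_inl, Polynomial.eval_mul, Polynomial.eval_pow,
                    Polynomial.eval_C, Polynomial.eval_X, NilconeAux.dv, pow_add]
                  ring
              | inr j =>
                  by_cases hij : i ≤ j
                  · simp [hmexp, hM2lr i j hij, NilconeAux.dv]
                  · have hji : (j : ℕ) < (i : ℕ) := Fin.lt_def.mp (not_le.mp hij)
                    simp only [hmexp, Sum.elim_inl, Sum.elim_inr, Polynomial.eval_mul,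
                      Polynomial.eval_pow, Polynomial.eval_C, Polynomial.eval_X, NilconeAux.dv]
                    have h1 : (i : ℕ) + 1 = ((i : ℕ) - (j : ℕ)) + ((j : ℕ) + 1) := by omega
                    rw [h1, pow_add]
                    have h2 := NilconeAux.hpowc ht ((j : ℕ) + 1)
                    linear_combination
                      (-(M₂ (Sum.inl i) (Sum.inr j) * t ^ ((i : ℕ) - (j : ℕ)))) * h2
          | inr i =>
              cases q with
              | inl j =>
                  by_cases hji : j ≤ i
                  · simp [hmexp, hM2rl i j hji, NilconeAux.dv]
                  · have hij : (i : ℕ) < (j : ℕ) := Fin.lt_def.mp (not_le.mp hji)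
                    simp only [hmexp, Sum.elim_inl, Sum.elim_inr, Polynomial.eval_mul,
                      Polynomial.eval_pow, Polynomial.eval_C, Polynomial.eval_X, NilconeAux.dv]
                    have h1 : (j : ℕ) + 1 = ((j : ℕ) - (i : ℕ)) + ((i : ℕ) + 1) := by omega
                    rw [h1, pow_add]
                    have h2 := NilconeAux.hpowc ht ((i : ℕ) + 1)
                    linear_combination
                      (-(M₂ (Sum.inr i) (Sum.inl j) * t ^ ((j : ℕ) - (i : ℕ)))) * h2
              | inr j => simp [hmexp, hM2rr i j, NilconeAux.dv]
    have heval : ∀ t : ℂ, (MvPolynomial.aeval U P : Polynomial ℂ).eval t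
        = MvPolynomial.eval (fun s => (U s).eval t) P := by
      intro t
      have h := MvPolynomial.eval₂_comp_left (Polynomial.evalRingHom t)
        (algebraMap ℂ (Polynomial ℂ)) U P
      have h2 : (Polynomial.evalRingHom t).comp (algebraMap ℂ (Polynomial ℂ))
          = RingHom.id ℂ := by
        ext r
        simp
      rw [h2] at h
      rw [MvPolynomial.aeval_def]
      exact h
    have hstage := hinv g hgJ v₂ M₂ halt₂ hdiag₂
    rw [hv2, hgM] at hstage
    have hFt : ∀ t : ℂ, t ≠ 0 → (MvPolynomial.aeval U P : Polynomial ℂ).eval t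
        = MvPolynomial.eval (Sum.elim v₂ (fun p => M₂ p.1 p.2)) P := by
      intro t ht
      rw [heval t, hact t ht]
      exact hinv (Matrix.diagonal (NilconeAux.dv n t)) (NilconeAux.dv_symp ht) v₂ M₂ halt₂ hdiag₂
    have hFzero : (MvPolynomial.aeval U P : Polynomial ℂ)
        - Polynomial.C (MvPolynomial.eval (Sum.elim v₂ (fun p => M₂ p.1 p.2)) P) = 0 := by
      apply Polynomial.eq_zero_of_infinite_isRoot
      apply Set.Infinite.mono (s := {t : ℂ | t ≠ 0})
      · intro t ht
        simp only [Set.mem_setOf_eq, Polynomial.IsRoot, Polynomial.eval_sub, Polynomial.eval_C]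
        rw [hFt t ht]
        ring
      · have h1 : {t : ℂ | t ≠ 0} = ({0} : Set ℂ)ᶜ := by ext x; simp
        rw [h1]
        exact Set.Finite.infinite_compl (Set.finite_singleton 0)
    have hFconst : (MvPolynomial.aeval U P : Polynomial ℂ)
        = Polynomial.C (MvPolynomial.eval (Sum.elim v₂ (fun p => M₂ p.1 p.2)) P) :=
      sub_eq_zero.mp hFzero
    have hU0 : (fun s => (U s).eval 0) = (fun _ => (0:ℂ)) := by
      funext s
      cases s with
      | inl q =>
          cases q with
          | inl i => simp [hU, hvexp]
          | inr i => simp [hU, hvr i]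
      | inr pq =>
          obtain ⟨p, q⟩ := pq
          cases p with
          | inl i =>
              cases q with
              | inl j => simp [hU, hmexp]
              | inr j =>
                  by_cases hij : i ≤ j
                  · simp [hU, hmexp, hM2lr i j hij]
                  · have hji : (j : ℕ) < (i : ℕ) := Fin.lt_def.mp (not_le.mp hij)
                    simp [hU, hmexp,
                      zero_pow (by omega : (i : ℕ) - (j : ℕ) ≠ 0)]
          | inr i =>
              cases q with
              | inl j =>
                  by_cases hji : j ≤ i
                  · simp [hU, hmexp, hM2rl i j hji]
                  · have hij : (i : ℕ) < (j : ℕ) := Fin.lt_def.mp (not_le.mp hji)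
                    simp [hU, hmexp,
                      zero_pow (by omega : (j : ℕ) - (i : ℕ) ≠ 0)]
              | inr j => simp [hU, hmexp, hM2rr i j]
    have hc₀ : MvPolynomial.eval (Sum.elim v₂ (fun p => M₂ p.1 p.2)) P = 0 := by
      have h1 := heval 0
      rw [hFconst, Polynomial.eval_C, hU0] at h1
      rw [h1, hP0]
    rw [hstage, hc₀]
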